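/- Let 𝕂 ∈ {ℝ, ℂ} and let X be a normed space over 𝕂 whose density character dens(X) equals κ, where κ ≥ ℵ₀ is a regular cardinal. Let UWD_κ denote the set of all κ-sequences (x_α)_{α<κ} in X such that (i) the set {‖x_α‖ : α < κ} is unbounded, and (ii) the set {x_α : α < κ} is dense in X for the weak topology σ(X,X*). Then UWD_κ is κ⁺-lineable as a subset of the vector space X^κ. -/

import Mathlib

open Cardinal

universe u

/-- The density character of a topological space: the least cardinality of a dense subset. -/
noncomputable def densityCharacter (X : Type u) [TopologicalSpace X] : Cardinal.{u} :=
  sInf { c : Cardinal.{u} | ∃ s : Set X, Dense s ∧ Cardinal.mk s = c }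

/-- The weak topology `σ(X, X*)` on a normed space `X` over `𝕜`: the initial topology induced
by all continuous linear functionals on `X`. -/
noncomputable def weakTopology (𝕜 : Type) (X : Type u) [RCLike 𝕜]
    [NormedAddCommGroup X] [NormedSpace 𝕜 X] : TopologicalSpace X :=
  ⨅ φ : X →L[𝕜] 𝕜, TopologicalSpace.induced φ inferInstance

/-- A set dense for the norm topology is dense for the weak topology. -/
lemma aux_dense_weak (𝕜 : Type) [RCLike 𝕜] (X : Type u) [NormedAddCommGroup X]
    [NormedSpace 𝕜 X] {S : Set X} (hS : Dense S) : @Dense X (weakTopology 𝕜 X) S := by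
  have hle : (inferInstance : TopologicalSpace X) ≤ weakTopology 𝕜 X :=
    le_iInf fun φ => continuous_iff_le_induced.mp φ.continuous
  have hid : @Continuous X X _ (weakTopology 𝕜 X) _root_.id := continuous_id_iff_le.mpr hle
  have hdr := @denseRange_id X (weakTopology 𝕜 X)
  have h2 := @DenseRange.dense_image X X _ (weakTopology 𝕜 X) S _root_.id hdr hid hS
  rwa [Set.image_id] at h2

/-- A dense subset of a nontrivial normed space is norm-unbounded. -/
lemma aux_dense_unbounded (𝕜 : Type) [RCLike 𝕜] (X : Type u) [NormedAddCommGroup X]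
    [NormedSpace 𝕜 X] [Nontrivial X] {S : Set X} (hS : Dense S) (C : ℝ) :
    ∃ d ∈ S, C < ‖d‖ := by
  obtain ⟨x₀, hx₀⟩ := exists_ne (0 : X)
  have hx₀n : (0:ℝ) < ‖x₀‖ := norm_pos_iff.mpr hx₀
  set r : ℝ := |C| + 2 with hr
  set y : X := (((r / ‖x₀‖ : ℝ) : 𝕜)) • x₀ with hy
  have hyn : ‖y‖ = r := by
    rw [hy, norm_smul, RCLike.norm_ofReal, abs_div, abs_of_pos hx₀n,
      div_mul_cancel₀ _ (ne_of_gt hx₀n), abs_of_pos (by positivity)]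
  obtain ⟨d, hdS, hd⟩ := Metric.mem_closure_iff.mp (hS y) 1 one_pos
  refine ⟨d, hdS, ?_⟩
  have h1 : ‖y‖ ≤ ‖y - d‖ + ‖d‖ := by
    calc ‖y‖ = ‖(y - d) + d‖ := by rw [sub_add_cancel]
      _ ≤ _ := norm_add_le _ _
  have h2 : ‖y - d‖ < 1 := by rwa [← dist_eq_norm]
  have hC : C ≤ |C| := le_abs_self C
  nlinarith [hyn]

/-- Let `𝕜 ∈ {ℝ, ℂ}` and let `X` be a normed space over `𝕜` whose density
character equals `κ`, where `κ ≥ ℵ₀` is a regular cardinal.  The set `UWD_κ` of all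
`κ`-sequences `(x_α)_{α < κ}` in `X` (functions from the ordinals below `κ` to `X`) such that
`{‖x α‖ : α < κ}` is unbounded and `{x α : α < κ}` is dense in the weak topology `σ(X, X*)`,
is `κ⁺`-lineable in `X ^ κ`. -/
theorem statement2 (𝕜 : Type) [RCLike 𝕜] (X : Type u)
    [NormedAddCommGroup X] [NormedSpace 𝕜 X]
    (κ : Cardinal.{u}) (hreg : κ.IsRegular)
    (hdens : densityCharacter X = κ) :
    ∃ W : Submodule 𝕜 (κ.ord.ToType → X),
      Module.rank 𝕜 ↥W = Order.succ κ ∧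
      ∀ x ∈ W, x ≠ 0 →
        (¬ ∃ C : ℝ, ∀ α : κ.ord.ToType, ‖x α‖ ≤ C) ∧
        @Dense X (weakTopology 𝕜 X) (Set.range x) := by
  have hκ0 : ℵ₀ ≤ κ := hreg.aleph0_le
  set T := κ.ord.ToType with hTdef
  have hT : #T = κ := Cardinal.mk_ord_toType κ
  -- a dense set of cardinality κ
  have hne : { c : Cardinal.{u} | ∃ s : Set X, Dense s ∧ #s = c }.Nonempty :=
    ⟨#(Set.univ : Set X), Set.univ, dense_univ, rfl⟩
  have hmem : ∃ s : Set X, Dense s ∧ #s = densityCharacter X := csInf_mem hne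
  rw [hdens] at hmem
  obtain ⟨s, hsd, hsc⟩ := hmem
  -- X is nontrivial
  have hnontriv : Nontrivial X := by
    by_contra h
    rw [not_nontrivial_iff_subsingleton] at h
    have h1 : densityCharacter X ≤ #(Set.univ : Set X) :=
      csInf_le' ⟨Set.univ, dense_univ, rfl⟩
    rw [hdens, Cardinal.mk_univ] at h1
    have h2 : #X ≤ 1 := Cardinal.le_one_iff_subsingleton.mpr h
    exact absurd (hκ0.trans (h1.trans h2)) (by simp [Cardinal.one_lt_aleph0.not_ge])
  -- enumeration of the dense set
  obtain ⟨ev⟩ : Nonempty (T ≃ s) := Cardinal.eq.mp (hT.trans hsc.symm)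
  set z : T → X := fun t => (ev t : X) with hzdef
  have hzr : Set.range z = s := by
    rw [hzdef]
    rw [show (fun t => (ev t : X)) = Subtype.val ∘ ev from rfl, Set.range_comp,
      Equiv.range_eq_univ, Set.image_univ, Subtype.range_coe]
  -- a point where z is nonzero
  obtain ⟨d₀, hd₀s, hd₀⟩ := aux_dense_unbounded 𝕜 X hsd 0
  obtain ⟨j₀, hj₀⟩ : ∃ j₀, z j₀ = d₀ := by rw [← Set.mem_range, hzr]; exact hd₀s
  have hzj₀ : z j₀ ≠ 0 := by rw [hj₀]; exact fun h => by simp [h] at hd₀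
  -- pairing equivalence
  obtain ⟨e⟩ : Nonempty (T ≃ T × T) := by
    rw [← Cardinal.eq]
    simp only [Cardinal.mk_prod, Cardinal.lift_id, hT]
    rw [Cardinal.mul_eq_self hκ0]
  -- the linear map Φ
  set Φ : (T → 𝕜) →ₗ[𝕜] (T → X) :=
    { toFun := fun g t => g (e t).1 • z (e t).2
      map_add' := fun g g' => by funext t; simp [add_smul]
      map_smul' := fun c g => by funext t; simp [mul_smul] } with hΦdef
  have hΦapp : ∀ g t, Φ g t = g (e t).1 • z (e t).2 := fun g t => rfl
  have hΦker : LinearMap.ker Φ = ⊥ := by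
    rw [LinearMap.ker_eq_bot']
    intro g hg
    funext i
    have h := congrFun hg (e.symm (i, j₀))
    rw [hΦapp, e.apply_symm_apply] at h
    simp only [Pi.zero_apply] at h ⊢
    rcases smul_eq_zero.mp h with h' | h'
    · exact h'
    · exact absurd h' hzj₀
  have hΦinj : Function.Injective Φ := LinearMap.ker_eq_bot.mp hΦker
  -- a linearly independent family of size κ⁺ in T → 𝕜
  have hInf : Infinite T := Cardinal.infinite_iff.mpr (hT ▸ hκ0)
  have hrank : Order.succ κ ≤ Module.rank 𝕜 (T → 𝕜) := by
    rw [rank_fun_infinite, Cardinal.mk_arrow, Cardinal.lift_uzero, hT]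
    calc Order.succ κ ≤ 2 ^ κ := Order.succ_le_of_lt (Cardinal.cantor κ)
      _ ≤ Cardinal.lift.{u} #𝕜 ^ κ := by
          apply Cardinal.power_le_power_right
          have h2 : (2 : Cardinal) ≤ #𝕜 := Cardinal.two_le_iff.mpr ⟨0, 1, zero_ne_one⟩
          calc (2:Cardinal.{u}) = Cardinal.lift.{u} (2:Cardinal.{0}) := by simp
            _ ≤ _ := Cardinal.lift_le.mpr h2
  obtain ⟨s', hs'c, hs'li⟩ := le_rank_iff_exists_linearIndependent.mp hrank
  -- the family v and the submodule W
  set v : s' → (T → X) := fun i => Φ i with hvdef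
  have hv : LinearIndependent 𝕜 v := hs'li.map' Φ hΦker
  refine ⟨Submodule.span 𝕜 (Set.range v), ?_, ?_⟩
  · rw [rank_span hv, Cardinal.mk_range_eq v hv.injective, hs'c]
  · intro x hx hx0
    -- x = Φ g for some g
    have hWle : Submodule.span 𝕜 (Set.range v) ≤ LinearMap.range Φ := by
      rw [Submodule.span_le]
      rintro _ ⟨i, rfl⟩
      exact ⟨i, rfl⟩
    obtain ⟨g, hg⟩ := hWle hx
    have hgne : g ≠ 0 := by
      intro h
      rw [h, map_zero] at hg
      exact hx0 hg.symm
    obtain ⟨i₀, hi₀⟩ : ∃ i₀, g i₀ ≠ 0 := by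
      by_contra h
      push_neg at h
      exact hgne (funext h)
    set a : 𝕜 := g i₀ with hadef
    -- a • s is contained in range x
    have hsub : (fun w : X => a • w) '' s ⊆ Set.range x := by
      rintro _ ⟨d, hd, rfl⟩
      obtain ⟨j, hj⟩ : ∃ j, z j = d := by rw [← Set.mem_range, hzr]; exact hd
      refine ⟨e.symm (i₀, j), ?_⟩
      rw [← hg, hΦapp, e.apply_symm_apply, hj]
    -- a • s is norm-dense
    have hsurj : Function.Surjective (fun w : X => a • w) := fun w =>
      ⟨a⁻¹ • w, by simp [smul_smul, mul_inv_cancel₀ hi₀]⟩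
    have hdS : Dense ((fun w : X => a • w) '' s) :=
      hsurj.denseRange.dense_image (continuous_const_smul a) hsd
    constructor
    · rintro ⟨C, hC⟩
      obtain ⟨d, hdm, hdn⟩ := aux_dense_unbounded 𝕜 X hdS C
      obtain ⟨α, hα⟩ := hsub hdm
      rw [← hα] at hdn
      exact absurd (hC α) (not_le.mpr hdn)
    · exact @Dense.mono X (weakTopology 𝕜 X) _ _ hsub (aux_dense_weak 𝕜 X hdS)
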